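/- The vector v = (σ², −σ³/2, (4σ+3)/2, −σ³), with σ = (1−√5)/2, satisfies Mv = τ³v for M = [[1,2,2,2],[0,2,1,0],[1,2,1,1],[1,1,1,1]] and τ = (1+√5)/2, and the entries of v sum to 1. -/

import Mathlib

theorem right_PF_eigenvector
    (τ σ : ℝ) (hτ : τ = (1 + Real.sqrt 5) / 2) (hσ : σ = (1 - Real.sqrt 5) / 2)
    (M : Matrix (Fin 4) (Fin 4) ℝ)
    (hM : M = !![1,2,2,2; 0,2,1,0; 1,2,1,1; 1,1,1,1])
    (v : Fin 4 → ℝ)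
    (hv : v = ![σ ^ 2, -σ ^ 3 / 2, (4 * σ + 3) / 2, -σ ^ 3]) :
    M.mulVec v = τ ^ 3 • v ∧ v 0 + v 1 + v 2 + v 3 = 1 := by
  have h5 : Real.sqrt 5 ^ 2 = 5 := Real.sq_sqrt (by norm_num)
  have h3 : Real.sqrt 5 ^ 3 = 5 * Real.sqrt 5 := by
    rw [pow_succ, h5, mul_comm]
  have h4 : Real.sqrt 5 ^ 4 = 25 := by
    rw [show Real.sqrt 5 ^ 4 = (Real.sqrt 5 ^ 2) ^ 2 by ring, h5]; norm_num
  have h6 : Real.sqrt 5 ^ 6 = 125 := by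
    rw [show (6:ℕ) = 2*3 by rfl, pow_mul, h5]; norm_num
  subst hτ hσ hM hv
  constructor
  · funext i
    fin_cases i <;>
      simp [Matrix.mulVec, dotProduct, Fin.sum_univ_succ] <;> ring_nf <;>
      simp only [h3, h4, h5, h6] <;> ring
  · simp; ring_nf; simp only [h3, h4, h5, h6]; ring
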